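/- Consider a multi-commodity routing instance with total demand d in which every edge e has an M/M/1 latency function ℓ_e(x) = 1/(u_e − x) with capacity u_e ≥ u_min > d, and let ρ_max = d/u_min < 1. For every θ ≥ 1, letting ρ_max(θ) = max{0, 1 − θ(1 − ρ_max)}, there exists a θ-PNE edge flow whose social cost is at most (1/2)·(1 + 1/√(1 − ρ_max(θ))) times the socially optimal cost; moreover, if θ ≥ 1/(1 − ρ_max) then there exists a θ-PNE edge flow whose social cost equals the socially optimal cost. -/

import Mathlib

open scoped BigOperators

/-- A routing instance: a finite directed (multi)graph given by source/target maps
on edges, a finite set of commodities with sources, sinks, demands, and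
load-dependent latency functions on edges. -/
structure RoutingInstance (V E K : Type*) where
  src : E → V
  tgt : E → V
  source : K → V
  sink : K → V
  demand : K → ℝ
  latency : E → ℝ → ℝ

namespace RoutingInstance

variable {V E K : Type*} [Fintype V] [Fintype E] [Fintype K] [DecidableEq E]

/-- Standard assumptions: positive demands, latencies nonnegative and
nondecreasing on `[0, ∞)`. -/
def Standard (G : RoutingInstance V E K) : Prop :=
  (∀ k, 0 < G.demand k) ∧
  (∀ e x, (0:ℝ) ≤ x → 0 ≤ G.latency e x) ∧
  (∀ e, MonotoneOn (G.latency e) (Set.Ici (0:ℝ)))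

/-- `G.IsWalkFrom s t l` : the list of edges `l` is a directed walk from `s` to `t`. -/
def IsWalkFrom (G : RoutingInstance V E K) : V → V → List E → Prop
  | s, t, [] => s = t
  | s, t, e :: es => G.src e = s ∧ IsWalkFrom G (G.tgt e) t es

/-- The list of vertices visited by a walk starting at `s`. -/
def walkVerts (G : RoutingInstance V E K) (s : V) (l : List E) : List V :=
  s :: l.map G.tgt

/-- A simple directed path from the source of commodity `k` to its sink. -/
def IsPathOf (G : RoutingInstance V E K) (k : K) (p : List E) : Prop :=
  G.IsWalkFrom (G.source k) (G.sink k) p ∧ (G.walkVerts (G.source k) p).Nodup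

/-- A feasible path flow: nonnegative, supported on simple `s_k`-`t_k` paths,
and routing the whole demand of each commodity. -/
def Feasible (G : RoutingInstance V E K) (f : K → (List E →₀ ℝ)) : Prop :=
  (∀ k p, 0 ≤ f k p) ∧
  (∀ k p, f k p ≠ 0 → G.IsPathOf k p) ∧
  (∀ k, ((f k).sum fun _ v => v) = G.demand k)

/-- Edge flow of commodity `k` induced by a path flow. -/
def edgeFlowK (G : RoutingInstance V E K) (f : K → (List E →₀ ℝ)) (k : K) (e : E) : ℝ :=
  (f k).sum fun p v => if e ∈ p then v else 0

/-- Total edge flow induced by a path flow. -/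
def edgeFlow (G : RoutingInstance V E K) (f : K → (List E →₀ ℝ)) (e : E) : ℝ :=
  ∑ k, G.edgeFlowK f k e

/-- Latency (cost) of a path under the edge flows induced by the path flow `f`. -/
def pathCost (G : RoutingInstance V E K) (f : K → (List E →₀ ℝ)) (p : List E) : ℝ :=
  (p.map fun e => G.latency e (G.edgeFlow f e)).sum

/-- A path is used by commodity `k` if it carries positive flow in `f`. -/
def Used (G : RoutingInstance V E K) (f : K → (List E →₀ ℝ)) (k : K) (p : List E) : Prop :=
  0 < f k p

/-- A path is positive for commodity `k` if each of its edges carries positive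
commodity-`k` flow. -/
def PositivePath (G : RoutingInstance V E K) (f : K → (List E →₀ ℝ)) (k : K) (p : List E) :
    Prop :=
  G.IsPathOf k p ∧ ∀ e ∈ p, 0 < G.edgeFlowK f k e

/-- θ-Positive Nash Equilibrium (a property of the induced edge flow):
every positive path costs at most θ times any path of the same commodity. -/
def IsPNE (G : RoutingInstance V E K) (θ : ℝ) (f : K → (List E →₀ ℝ)) : Prop :=
  ∀ k p q, G.PositivePath f k p → G.IsPathOf k q →
    G.pathCost f p ≤ θ * G.pathCost f q

/-- θ-Used Nash Equilibrium: every used path costs at most θ times any path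
of the same commodity. -/
def IsUNE (G : RoutingInstance V E K) (θ : ℝ) (f : K → (List E →₀ ℝ)) : Prop :=
  ∀ k p q, G.Used f k p → G.IsPathOf k q →
    G.pathCost f p ≤ θ * G.pathCost f q

/-- θ-Envy Free: every used path costs at most θ times any used path
of the same commodity. -/
def IsEF (G : RoutingInstance V E K) (θ : ℝ) (f : K → (List E →₀ ℝ)) : Prop :=
  ∀ k p q, G.Used f k p → G.Used f k q →
    G.pathCost f p ≤ θ * G.pathCost f q

/-- Social cost of a path flow. -/
def socialCost (G : RoutingInstance V E K) (f : K → (List E →₀ ℝ)) : ℝ :=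
  ∑ e, G.edgeFlow f e * G.latency e (G.edgeFlow f e)

end RoutingInstance
set_option linter.unusedSectionVars false
set_option maxHeartbeats 1000000

namespace RoutingInstance

variable {V E K : Type*} [Fintype V] [Fintype E] [Fintype K] [DecidableEq E]
variable (G : RoutingInstance V E K)

def lcost (γ : E → ℝ) (l : List E) : ℝ := (l.map γ).sum

lemma lcost_cons (γ : E → ℝ) (e : E) (l : List E) :
    lcost γ (e :: l) = γ e + lcost γ l := by simp [lcost]

lemma lcost_append (γ : E → ℝ) (l₁ l₂ : List E) :
    lcost γ (l₁ ++ l₂) = lcost γ l₁ + lcost γ l₂ := by simp [lcost]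

lemma lcost_nonneg {γ : E → ℝ} (hγ : ∀ e, 0 ≤ γ e) (l : List E) : 0 ≤ lcost γ l := by
  induction l with
  | nil => simp [lcost]
  | cons e es ih => rw [lcost_cons]; exact add_nonneg (hγ e) ih

lemma isWalkFrom_append' {s t : V} {l₁ l₂ : List E} :
    G.IsWalkFrom s t (l₁ ++ l₂) ↔ ∃ m, G.IsWalkFrom s m l₁ ∧ G.IsWalkFrom m t l₂ := by
  induction l₁ generalizing s with
  | nil =>
      constructor
      · intro h; exact ⟨s, rfl, h⟩
      · rintro ⟨m, hm, h⟩; cases hm; exact h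
  | cons e es ih =>
      constructor
      · rintro ⟨hsrc, h⟩
        obtain ⟨m, h1, h2⟩ := (ih (s := G.tgt e)).1 h
        exact ⟨m, ⟨hsrc, h1⟩, h2⟩
      · rintro ⟨m, ⟨hsrc, h1⟩, h2⟩
        exact ⟨hsrc, (ih (s := G.tgt e)).2 ⟨m, h1, h2⟩⟩

lemma walkVerts_cons (s : V) (e : E) (l : List E) :
    G.walkVerts s (e :: l) = s :: G.walkVerts (G.tgt e) l := rfl

lemma walkVerts_append (s : V) (l₁ l₂ : List E) :
    G.walkVerts s (l₁ ++ l₂) = G.walkVerts s l₁ ++ l₂.map G.tgt := by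
  simp [walkVerts]

lemma nodup_of_walkVerts_nodup {s : V} {l : List E} (h : (G.walkVerts s l).Nodup) :
    l.Nodup := ((List.nodup_cons.1 h).2).of_map _

lemma suffix_walk {γ : E → ℝ} (hγ : ∀ e, 0 ≤ γ e) :
    ∀ (l : List E) (a v w : V), G.IsWalkFrom a v l → (G.walkVerts a l).Nodup →
      w ∈ G.walkVerts a l →
      ∃ l', G.IsWalkFrom w v l' ∧ (G.walkVerts w l').Nodup ∧ lcost γ l' ≤ lcost γ l := by
  intro l
  induction l with
  | nil =>
      intro a v w hw hnd hmem
      simp [walkVerts] at hmem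
      subst hmem
      exact ⟨[], hw, hnd, le_refl _⟩
  | cons e es ih =>
      intro a v w hw hnd hmem
      rw [walkVerts_cons] at hmem hnd
      rcases List.mem_cons.1 hmem with h | h
      · subst h; exact ⟨e :: es, hw, by rw [walkVerts_cons]; exact hnd, le_refl _⟩
      · obtain ⟨l', h1, h2, h3⟩ := ih (G.tgt e) v w hw.2 (List.nodup_cons.1 hnd).2 h
        refine ⟨l', h1, h2, h3.trans ?_⟩
        rw [lcost_cons]
        linarith [hγ e]

lemma reduce_walk {γ : E → ℝ} (hγ : ∀ e, 0 ≤ γ e) :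
    ∀ (l : List E) (s v : V), G.IsWalkFrom s v l →
      ∃ l', G.IsWalkFrom s v l' ∧ (G.walkVerts s l').Nodup ∧ lcost γ l' ≤ lcost γ l := by
  intro l
  induction l with
  | nil =>
      intro s v hw
      exact ⟨[], hw, by simp [walkVerts], le_refl _⟩
  | cons e es ih =>
      intro s v hw
      obtain ⟨l', h1, h2, h3⟩ := ih (G.tgt e) v hw.2
      by_cases hs : s ∈ G.walkVerts (G.tgt e) l'
      · obtain ⟨l'', g1, g2, g3⟩ := G.suffix_walk hγ l' (G.tgt e) v s h1 h2 hs
        refine ⟨l'', g1, g2, ?_⟩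
        rw [lcost_cons]
        linarith [hγ e]
      · refine ⟨e :: l', ⟨hw.1, h1⟩, ?_, ?_⟩
        · rw [walkVerts_cons]; exact List.nodup_cons.2 ⟨hs, h2⟩
        · rw [lcost_cons, lcost_cons]; linarith

section Potential

variable (γ : E → ℝ) (s : V)

/-- simple paths from `s` to `v` -/
def SP (v : V) : Set (List E) :=
  {l | G.IsWalkFrom s v l ∧ (G.walkVerts s l).Nodup}

lemma SP_finite (v : V) : (G.SP s v).Finite := by
  have h1 : G.SP s v ⊆ {l : List E | l.Nodup} := by
    intro l hl
    exact G.nodup_of_walkVerts_nodup hl.2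
  have h2 : {l : List E | l.Nodup}.Finite := by
    have : {l : List E | l.Nodup} = Set.range (fun n : {l : List E // l.Nodup} => (n : List E)) := by
      ext l
      constructor
      · intro h; exact ⟨⟨l, h⟩, rfl⟩
      · rintro ⟨⟨l', h'⟩, rfl⟩; exact h'
    rw [this]
    exact Set.finite_range _
  exact h2.subset h1

/-- potential: minimum cost of simple paths from s to v -/
noncomputable def pot (v : V) : ℝ := sInf (lcost γ '' G.SP s v)

lemma pot_le_walk (hγ : ∀ e, 0 ≤ γ e) {v : V} {l : List E} (hl : G.IsWalkFrom s v l) :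
    G.pot (γ := γ) s v ≤ lcost γ l := by
  obtain ⟨l', h1, h2, h3⟩ := G.reduce_walk hγ l s v hl
  refine le_trans (csInf_le ?_ ?_) h3
  · exact ((G.SP_finite s v).image _).bddBelow
  · exact ⟨l', ⟨h1, h2⟩, rfl⟩

lemma pot_attained {v : V} (hv : (G.SP s v).Nonempty) :
    ∃ l ∈ G.SP s v, lcost γ l = G.pot (γ := γ) s v := by
  have h : sInf (lcost γ '' G.SP s v) ∈ lcost γ '' G.SP s v :=
    Set.Nonempty.csInf_mem (hv.image _) ((G.SP_finite s v).image _)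
  obtain ⟨l, hl, hc⟩ := h
  exact ⟨l, hl, hc⟩

lemma pot_source (hγ : ∀ e, 0 ≤ γ e) : G.pot (γ := γ) s s = 0 := by
  have h1 : G.pot (γ := γ) s s ≤ 0 := by
    have := G.pot_le_walk γ s hγ (v := s) (l := []) rfl
    simpa [lcost] using this
  have h2 : 0 ≤ G.pot (γ := γ) s s := by
    apply le_csInf
    · exact ⟨lcost γ [], ⟨[], ⟨rfl, by simp [walkVerts]⟩, rfl⟩⟩
    · rintro b ⟨l, _, rfl⟩
      exact lcost_nonneg hγ l
  linarith

/-- telescoping of costs along a walk whose edges are all tight -/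
lemma telescope {l : List E} :
    ∀ {w v : V}, G.IsWalkFrom w v l →
      (∀ e ∈ l, G.pot (γ := γ) s (G.tgt e) = G.pot (γ := γ) s (G.src e) + γ e) →
      lcost γ l = G.pot (γ := γ) s v - G.pot (γ := γ) s w := by
  induction l with
  | nil =>
      intro w v hw _
      cases hw
      simp [lcost]
  | cons e es ih =>
      intro w v hw htight
      have h1 := htight e List.mem_cons_self
      have h2 := ih hw.2 (fun e' he' => htight e' (List.mem_cons_of_mem e he'))
      rw [lcost_cons, h2, hw.1] at *
      rw [h1]
      ring

/-- MAIN abstract lemma: a path all of whose edges lie on cost-minimal simple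
paths is itself cost-minimal. -/
lemma positive_path_min (hγ : ∀ e, 0 ≤ γ e) (t : V) (U : Set (List E))
    (hU : ∀ r ∈ U, r ∈ G.SP s t)
    (hUmin : ∀ r ∈ U, ∀ q ∈ G.SP s t, lcost γ r ≤ lcost γ q)
    (p : List E) (hp : p ∈ G.SP s t)
    (hpos : ∀ e ∈ p, ∃ r ∈ U, e ∈ r)
    (q : List E) (hq : q ∈ G.SP s t) :
    lcost γ p ≤ lcost γ q := by
  classical
  -- every edge on a used path is tight
  have htight : ∀ e, (∃ r ∈ U, e ∈ r) →
      G.pot (γ := γ) s (G.tgt e) = G.pot (γ := γ) s (G.src e) + γ e := by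
    rintro e ⟨r, hrU, her⟩
    obtain ⟨r₁, r₂, hre⟩ := List.append_of_mem her
    have hrsp := hU r hrU
    have hrw : G.IsWalkFrom s t r := hrsp.1
    rw [hre] at hrw
    obtain ⟨m, hw1, hw2⟩ := (G.isWalkFrom_append').1 hrw
    have hsrc : G.src e = m := hw2.1
    have hw2' : G.IsWalkFrom (G.tgt e) t r₂ := hw2.2
    -- nodup of prefix
    have hpre : (G.walkVerts s r₁).Nodup := by
      have := hrsp.2
      rw [hre, walkVerts_append] at this
      exact this.of_append_left
    -- src e reachable
    have hreach_src : r₁ ∈ G.SP s (G.src e) := ⟨hsrc ▸ hw1, hpre⟩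
    -- μ(src e) ≤ cost r₁
    have h1 : G.pot (γ := γ) s (G.src e) ≤ lcost γ r₁ :=
      G.pot_le_walk γ s hγ (hsrc ▸ hw1)
    -- μ(tgt e) ≤ μ(src e) + γ e
    obtain ⟨ls, hls, hlc⟩ := G.pot_attained γ s (v := G.src e) ⟨r₁, hreach_src⟩
    have h2 : G.pot (γ := γ) s (G.tgt e) ≤ G.pot (γ := γ) s (G.src e) + γ e := by
      have hwalk : G.IsWalkFrom s (G.tgt e) (ls ++ [e]) := by
        rw [G.isWalkFrom_append']
        exact ⟨G.src e, hls.1, ⟨rfl, rfl⟩⟩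
      have := G.pot_le_walk γ s hγ hwalk
      rw [lcost_append, hlc] at this
      simpa [lcost] using this
    -- tgt e reachable
    have hreach_tgt : (G.SP s (G.tgt e)).Nonempty := by
      have hwalk : G.IsWalkFrom s (G.tgt e) (ls ++ [e]) := by
        rw [G.isWalkFrom_append']
        exact ⟨G.src e, hls.1, ⟨rfl, rfl⟩⟩
      obtain ⟨l', a1, a2, _⟩ := G.reduce_walk hγ (ls ++ [e]) s (G.tgt e) hwalk
      exact ⟨l', a1, a2⟩
    -- μ(t) ≤ μ(tgt e) + cost r₂
    obtain ⟨lt, hlt, hltc⟩ := G.pot_attained γ s hreach_tgt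
    have h3 : G.pot (γ := γ) s t ≤ G.pot (γ := γ) s (G.tgt e) + lcost γ r₂ := by
      have hwalk : G.IsWalkFrom s t (lt ++ r₂) := by
        rw [G.isWalkFrom_append']
        exact ⟨G.tgt e, hlt.1, hw2'⟩
      have := G.pot_le_walk γ s hγ hwalk
      rw [lcost_append, hltc] at this
      exact this
    -- μ(t) = cost r
    have h4 : G.pot (γ := γ) s t = lcost γ r := by
      have ha : G.pot (γ := γ) s t ≤ lcost γ r := G.pot_le_walk γ s hγ hrsp.1
      obtain ⟨qt, hqt, hqtc⟩ := G.pot_attained γ s (v := t) ⟨r, hrsp⟩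
      have hb : lcost γ r ≤ lcost γ qt := hUmin r hrU qt hqt
      linarith [hqtc]
    have hcost : lcost γ r = lcost γ r₁ + γ e + lcost γ r₂ := by
      rw [hre, lcost_append, lcost_cons]; ring
    linarith
  have htel := G.telescope γ (s := s) (l := p) hp.1 (fun e he => htight e (hpos e he))
  have hq' : G.pot (γ := γ) s t ≤ lcost γ q := G.pot_le_walk γ s hγ hq.1
  have hsrc0 : G.pot (γ := γ) s s = 0 := G.pot_source γ s hγ
  linarith

end Potential


end RoutingInstance

namespace RoutingInstance

variable {V E K : Type*} [Fintype V] [Fintype E] [Fintype K] [DecidableEq E]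
variable (G : RoutingInstance V E K)

section Omega

/-- finite type of duplicate-free edge lists -/
abbrev ND (E : Type*) [DecidableEq E] := {l : List E // l.Nodup}

/-- commodity edge flow in coordinate world -/
def Xk (k : K) (e : E) (ω : K → ND E → ℝ) : ℝ :=
  ∑ n : ND E, if e ∈ (n : List E) then ω k n else 0

/-- total edge flow in coordinate world -/
def Xe (e : E) (ω : K → ND E → ℝ) : ℝ := ∑ k, Xk k e ω

/-- feasibility in coordinate world -/
def FeasO (ω : K → ND E → ℝ) : Prop :=
  (∀ k n, 0 ≤ ω k n) ∧ (∀ k (n : ND E), ω k n ≠ 0 → G.IsPathOf k (n : List E)) ∧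
  (∀ k, ∑ n : ND E, ω k n = G.demand k)

/-- coordinate flow to path flow -/
noncomputable def toF (ω : K → ND E → ℝ) : K → (List E →₀ ℝ) :=
  fun k => ∑ n : ND E, Finsupp.single (n : List E) (ω k n)

lemma edges_nodup_of_isPathOf {k : K} {p : List E} (hp : G.IsPathOf k p) : p.Nodup :=
  G.nodup_of_walkVerts_nodup hp.2

lemma toF_apply (ω : K → ND E → ℝ) (k : K) (l : List E) :
    toF ω k l = if h : l.Nodup then ω k ⟨l, h⟩ else 0 := by
  classical
  rw [toF, Finsupp.finset_sum_apply]
  split_ifs with h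
  · rw [Finset.sum_eq_single (⟨l, h⟩ : ND E)]
    · simp [Finsupp.single_apply]
    · intro n _ hn
      rw [Finsupp.single_apply]
      rw [if_neg]
      intro hc
      exact hn (Subtype.ext hc)
    · intro hc; exact absurd (Finset.mem_univ _) hc
  · apply Finset.sum_eq_zero
    intro n _
    rw [Finsupp.single_apply, if_neg]
    intro hc
    exact h (hc ▸ n.2)

lemma toF_apply_coe (ω : K → ND E → ℝ) (k : K) (n : ND E) :
    toF ω k (n : List E) = ω k n := by
  rw [toF_apply, dif_pos n.2]

/-- key sum bridge for Finsupps supported on nodup lists -/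
lemma finsupp_sum_bridge (F : List E →₀ ℝ) (hsupp : ∀ p ∈ F.support, p.Nodup)
    (g : List E → ℝ → ℝ) (hg : ∀ p, g p 0 = 0) :
    F.sum g = ∑ n : ND E, g (n : List E) (F (n : List E)) := by
  classical
  have himg : F.support ⊆ Finset.univ.image (fun n : ND E => (n : List E)) := by
    intro p hp
    exact Finset.mem_image.2 ⟨⟨p, hsupp p hp⟩, Finset.mem_univ _, rfl⟩
  rw [Finsupp.sum]
  rw [Finset.sum_subset himg]
  · rw [Finset.sum_image (by intro a _ b _ h; exact Subtype.ext h)]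
  · intro p _ hp
    rw [Finsupp.notMem_support_iff.1 hp]
    exact hg p

lemma feasible_support_nodup {f : K → (List E →₀ ℝ)} (hf : G.Feasible f) (k : K) :
    ∀ p ∈ (f k).support, p.Nodup := by
  intro p hp
  exact G.edges_nodup_of_isPathOf (hf.2.1 k p (Finsupp.mem_support_iff.1 hp))

/-- path flow to coordinate flow -/
def ofF (f : K → (List E →₀ ℝ)) : K → ND E → ℝ := fun k n => f k (n : List E)

lemma ofF_feas {f : K → (List E →₀ ℝ)} (hf : G.Feasible f) : G.FeasO (ofF f) := by
  refine ⟨fun k n => hf.1 k _, fun k n hn => hf.2.1 k _ hn, fun k => ?_⟩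
  have := finsupp_sum_bridge (f k) (G.feasible_support_nodup hf k)
    (fun _ v => v) (fun _ => rfl)
  rw [← hf.2.2 k, this]
  rfl

lemma ofF_Xk {f : K → (List E →₀ ℝ)} (hf : G.Feasible f) (k : K) (e : E) :
    Xk k e (ofF f) = G.edgeFlowK f k e := by
  rw [Xk, edgeFlowK]
  rw [finsupp_sum_bridge (f k) (G.feasible_support_nodup hf k)
    (fun p v => if e ∈ p then v else 0) (fun p => by simp)]
  rfl

lemma ofF_Xe {f : K → (List E →₀ ℝ)} (hf : G.Feasible f) (e : E) :
    Xe e (ofF f) = G.edgeFlow f e := by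
  rw [Xe, edgeFlow]
  exact Finset.sum_congr rfl fun k _ => G.ofF_Xk hf k e

lemma toF_support_nodup (ω : K → ND E → ℝ) (k : K) :
    ∀ p ∈ (toF ω k).support, p.Nodup := by
  intro p hp
  have := Finsupp.mem_support_iff.1 hp
  rw [toF_apply] at this
  by_contra h
  rw [dif_neg h] at this
  exact this rfl

lemma toF_feasible {ω : K → ND E → ℝ} (hω : G.FeasO ω) : G.Feasible (toF ω) := by
  refine ⟨fun k p => ?_, fun k p hp => ?_, fun k => ?_⟩
  · rw [toF_apply]
    split_ifs with h
    · exact hω.1 k _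
    · exact le_refl 0
  · rw [toF_apply] at hp
    by_cases h : p.Nodup
    · rw [dif_pos h] at hp
      exact hω.2.1 k ⟨p, h⟩ hp
    · rw [dif_neg h] at hp; exact absurd rfl hp
  · rw [finsupp_sum_bridge _ (toF_support_nodup ω k) (fun _ v => v) (fun _ => rfl)]
    rw [← hω.2.2 k]
    exact Finset.sum_congr rfl fun n _ => by rw [toF_apply_coe]

lemma toF_Xk (ω : K → ND E → ℝ) (k : K) (e : E) :
    G.edgeFlowK (toF ω) k e = Xk k e ω := by
  rw [edgeFlowK, finsupp_sum_bridge _ (toF_support_nodup ω k)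
    (fun p v => if e ∈ p then v else 0) (fun p => by simp), Xk]
  exact Finset.sum_congr rfl fun n _ => by rw [toF_apply_coe]

lemma toF_Xe (ω : K → ND E → ℝ) (e : E) :
    G.edgeFlow (toF ω) e = Xe e ω := by
  rw [edgeFlow, Xe]
  exact Finset.sum_congr rfl fun k _ => G.toF_Xk ω k e

lemma toF_pathCost (ω : K → ND E → ℝ) (p : List E) :
    G.pathCost (toF ω) p = lcost (fun e => G.latency e (Xe e ω)) p := by
  rw [pathCost, lcost]
  congr 1
  exact List.map_congr_left fun e _ => by rw [toF_Xe]

lemma toF_socialCost (ω : K → ND E → ℝ) :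
    G.socialCost (toF ω) = ∑ e, Xe e ω * G.latency e (Xe e ω) := by
  rw [socialCost]
  exact Finset.sum_congr rfl fun e _ => by rw [toF_Xe]

lemma ofF_socialCost {f : K → (List E →₀ ℝ)} (hf : G.Feasible f) :
    G.socialCost f = ∑ e, Xe e (ofF f) * G.latency e (Xe e (ofF f)) := by
  rw [socialCost]
  exact Finset.sum_congr rfl fun e _ => by rw [G.ofF_Xe hf]

/- bounds -/

lemma coord_le_demand {ω : K → ND E → ℝ} (hω : G.FeasO ω) (k : K) (n : ND E) :
    ω k n ≤ G.demand k := by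
  rw [← hω.2.2 k]
  exact Finset.single_le_sum (fun i _ => hω.1 k i) (Finset.mem_univ n)

lemma Xk_nonneg {ω : K → ND E → ℝ} (hω : G.FeasO ω) (k : K) (e : E) :
    0 ≤ Xk k e ω :=
  Finset.sum_nonneg fun n _ => by
    split_ifs
    · exact hω.1 k n
    · exact le_refl 0

lemma Xk_le_demand {ω : K → ND E → ℝ} (hω : G.FeasO ω) (k : K) (e : E) :
    Xk k e ω ≤ G.demand k := by
  rw [← hω.2.2 k]
  exact Finset.sum_le_sum fun n _ => by
    split_ifs
    · exact le_refl _
    · exact hω.1 k n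

lemma Xe_nonneg {ω : K → ND E → ℝ} (hω : G.FeasO ω) (e : E) :
    0 ≤ Xe e ω :=
  Finset.sum_nonneg fun k _ => G.Xk_nonneg hω k e

lemma Xe_le_d {ω : K → ND E → ℝ} (hω : G.FeasO ω) (e : E) :
    Xe e ω ≤ ∑ k, G.demand k :=
  Finset.sum_le_sum fun k _ => G.Xk_le_demand hω k e

/- compactness -/

lemma feasO_isClosed : IsClosed {ω : K → ND E → ℝ | G.FeasO ω} := by
  classical
  have hcoord : ∀ (k : K) (n : ND E), Continuous (fun ω : K → ND E → ℝ => ω k n) :=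
    fun k n => (continuous_apply n).comp (continuous_apply k)
  have h1 : IsClosed {ω : K → ND E → ℝ | ∀ k n, 0 ≤ ω k n} := by
    have : {ω : K → ND E → ℝ | ∀ k n, 0 ≤ ω k n} =
        ⋂ k, ⋂ n, {ω : K → ND E → ℝ | 0 ≤ ω k n} := by
      ext ω; simp [Set.mem_iInter]
    rw [this]
    exact isClosed_iInter fun k => isClosed_iInter fun n =>
      isClosed_le continuous_const (hcoord k n)
  have h2 : IsClosed {ω : K → ND E → ℝ |
      ∀ k (n : ND E), ω k n ≠ 0 → G.IsPathOf k (n : List E)} := by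
    have : {ω : K → ND E → ℝ | ∀ k (n : ND E), ω k n ≠ 0 → G.IsPathOf k (n : List E)} =
        ⋂ k, ⋂ n, {ω : K → ND E → ℝ | ω k n ≠ 0 → G.IsPathOf k (n : List E)} := by
      ext ω; simp [Set.mem_iInter]
    rw [this]
    refine isClosed_iInter fun k => isClosed_iInter fun n => ?_
    by_cases h : G.IsPathOf k (n : List E)
    · have : {ω : K → ND E → ℝ | ω k n ≠ 0 → G.IsPathOf k (n : List E)} = Set.univ := by
        ext ω; simp [h]
      rw [this]; exact isClosed_univ
    · have : {ω : K → ND E → ℝ | ω k n ≠ 0 → G.IsPathOf k (n : List E)} =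
          {ω : K → ND E → ℝ | ω k n = 0} := by
        ext ω
        simp only [Set.mem_setOf_eq]
        constructor
        · intro hω; by_contra hc; exact h (hω hc)
        · intro hω hc; exact absurd hω hc
      rw [this]
      exact isClosed_eq (hcoord k n) continuous_const
  have h3 : IsClosed {ω : K → ND E → ℝ | ∀ k, ∑ n : ND E, ω k n = G.demand k} := by
    have : {ω : K → ND E → ℝ | ∀ k, ∑ n : ND E, ω k n = G.demand k} =
        ⋂ k, {ω : K → ND E → ℝ | ∑ n : ND E, ω k n = G.demand k} := by
      ext ω; simp [Set.mem_iInter]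
    rw [this]
    refine isClosed_iInter fun k => isClosed_eq ?_ continuous_const
    exact continuous_finset_sum _ fun n _ => hcoord k n
  have : {ω : K → ND E → ℝ | G.FeasO ω} =
      {ω : K → ND E → ℝ | ∀ k n, 0 ≤ ω k n} ∩
      ({ω : K → ND E → ℝ | ∀ k (n : ND E), ω k n ≠ 0 → G.IsPathOf k (n : List E)} ∩
       {ω : K → ND E → ℝ | ∀ k, ∑ n : ND E, ω k n = G.demand k}) := by
    ext ω
    simp only [Set.mem_setOf_eq, Set.mem_inter_iff]
    exact ⟨fun h => ⟨h.1, h.2.1, h.2.2⟩, fun h => ⟨h.1, h.2.1, h.2.2⟩⟩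
  rw [this]
  exact h1.inter (h2.inter h3)

lemma feasO_isCompact : IsCompact {ω : K → ND E → ℝ | G.FeasO ω} := by
  refine IsCompact.of_isClosed_subset (isCompact_Icc
    (a := (fun _ _ => 0 : K → ND E → ℝ))
    (b := (fun k _ => G.demand k : K → ND E → ℝ))) (G.feasO_isClosed) ?_
  intro ω hω
  constructor
  · intro k; intro n; exact hω.1 k n
  · intro k; intro n; exact G.coord_le_demand hω k n

/-- minimizer of a continuous potential over feasible coordinate flows -/
lemma exists_min (H : E → ℝ → ℝ)
    (hH : ∀ e, ContinuousOn (H e) (Set.Icc 0 (∑ k, G.demand k)))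
    (hne : ∃ f : K → (List E →₀ ℝ), G.Feasible f) :
    ∃ ω₀, G.FeasO ω₀ ∧ ∀ ω, G.FeasO ω →
      ∑ e, H e (Xe e ω₀) ≤ ∑ e, H e (Xe e ω) := by
  obtain ⟨f, hf⟩ := hne
  have hne' : {ω : K → ND E → ℝ | G.FeasO ω}.Nonempty := ⟨ofF f, G.ofF_feas hf⟩
  have hcont : ContinuousOn (fun ω : K → ND E → ℝ => ∑ e, H e (Xe e ω))
      {ω : K → ND E → ℝ | G.FeasO ω} := by
    refine continuousOn_finset_sum _ fun e _ => ?_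
    have hXe : Continuous (fun ω : K → ND E → ℝ => Xe e ω) := by
      refine continuous_finset_sum _ fun k _ => ?_
      refine continuous_finset_sum _ fun n _ => ?_
      split_ifs
      · exact (continuous_apply n).comp (continuous_apply k)
      · exact continuous_const
    refine (hH e).comp hXe.continuousOn ?_
    intro ω hω
    exact ⟨G.Xe_nonneg hω e, G.Xe_le_d hω e⟩
  obtain ⟨ω₀, hω₀, hmin⟩ := G.feasO_isCompact.exists_isMinOn hne' hcont
  exact ⟨ω₀, hω₀, fun ω hω => hmin hω⟩

end Omega

end RoutingInstance

namespace RoutingInstance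

variable {V E K : Type*} [Fintype V] [Fintype E] [Fintype K] [DecidableEq E]
variable (G : RoutingInstance V E K)

section MM1

/-- M/M/1 latency -/
noncomputable def ellf (u : E → ℝ) (e : E) (x : ℝ) : ℝ := 1 / (u e - x)

/-- interpolated cost -/
noncomputable def cf (u : E → ℝ) (σ : ℝ) (e : E) (x : ℝ) : ℝ :=
  1 / (u e - x) + σ * x / (u e - x) ^ 2

/-- primitive of the interpolated cost -/
noncomputable def hf (u : E → ℝ) (σ : ℝ) (e : E) (x : ℝ) : ℝ :=
  -(1 - σ) * Real.log (u e - x) + σ * (x / (u e - x))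

lemma hf_hasDerivAt (u : E → ℝ) (σ : ℝ) (e : E) {x : ℝ} (hx : x < u e) :
    HasDerivAt (hf u σ e) (cf u σ e x) x := by
  have hne : u e - x ≠ 0 := by linarith
  have h1 : HasDerivAt (fun y : ℝ => u e - y) (-1) x := by
    simpa using (hasDerivAt_id x).const_sub (u e)
  have hlog : HasDerivAt (fun y : ℝ => Real.log (u e - y)) (-1 / (u e - x)) x := by
    simpa using h1.log hne
  have hdiv : HasDerivAt (fun y : ℝ => y / (u e - y))
      ((1 * (u e - x) - x * (-1)) / (u e - x) ^ 2) x :=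
    (hasDerivAt_id x).div h1 hne
  have := (hlog.const_mul (-(1 - σ))).add (hdiv.const_mul σ)
  refine this.congr_deriv ?_
  rw [cf]
  field_simp
  ring

lemma cf_nonneg (u : E → ℝ) {σ : ℝ} (hσ : 0 ≤ σ) (e : E) {x : ℝ}
    (h0 : 0 ≤ x) (h1 : x < u e) : 0 ≤ cf u σ e x := by
  have : (0:ℝ) < u e - x := by linarith
  have := mul_nonneg (mul_nonneg hσ h0) (le_of_lt (inv_pos.2 (pow_pos this 2)))
  rw [cf]
  have hinv : 0 ≤ 1 / (u e - x) := by positivity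
  have : 0 ≤ σ * x / (u e - x) ^ 2 := by positivity
  linarith

lemma ellf_pos (u : E → ℝ) (e : E) {x : ℝ} (h1 : x < u e) : 0 < ellf u e x := by
  rw [ellf]
  have h : (0:ℝ) < u e - x := by linarith
  exact one_div_pos.mpr h

lemma ellf_le_cf (u : E → ℝ) {σ : ℝ} (hσ : 0 ≤ σ) (e : E) {x : ℝ}
    (h0 : 0 ≤ x) (h1 : x < u e) : ellf u e x ≤ cf u σ e x := by
  rw [ellf, cf]
  have : (0:ℝ) < u e - x := by linarith
  have : 0 ≤ σ * x / (u e - x) ^ 2 := by positivity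
  linarith

/-- ratio bound: `cf ≤ (1 + σ d/(umin - d)) ℓ` for loads in `[0,d]` -/
lemma cf_le_ratio (u : E → ℝ) {σ d umin : ℝ} (hσ : 0 ≤ σ)
    (hu : ∀ e, umin ≤ u e) (hd : d < umin) (e : E) {x : ℝ}
    (h0 : 0 ≤ x) (h1 : x ≤ d) :
    cf u σ e x ≤ (1 + σ * d / (umin - d)) * ellf u e x := by
  have hxu : x < u e := by linarith [hu e]
  have hux : (0:ℝ) < u e - x := by linarith
  have humd : (0:ℝ) < umin - d := by linarith
  have key : 0 ≤ d * (u e - x) - x * (umin - d) := by nlinarith [hu e]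
  have hid : (1 + σ * d / (umin - d)) * ellf u e x - cf u σ e x =
      σ * (d * (u e - x) - x * (umin - d)) / ((umin - d) * (u e - x) ^ 2) := by
    rw [cf, ellf]
    field_simp
    ring
  have hpos : 0 ≤ σ * (d * (u e - x) - x * (umin - d)) / ((umin - d) * (u e - x) ^ 2) := by
    apply div_nonneg (mul_nonneg hσ key)
    positivity
  linarith [hid ▸ hpos]


end MM1

/-- a right-local minimum at 0 has nonnegative derivative -/
lemma deriv_nonneg_of_right_min {φ : ℝ → ℝ} {L ε₀ : ℝ} (h : HasDerivAt φ L 0)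
    (hε₀ : 0 < ε₀) (hmin : ∀ ε, 0 ≤ ε → ε ≤ ε₀ → φ 0 ≤ φ ε) : 0 ≤ L := by
  by_contra hL
  push_neg at hL
  have hslope : Filter.Tendsto (slope φ 0) (nhdsWithin 0 (Set.Ioi 0)) (nhds L) :=
    ((hasDerivAt_iff_tendsto_slope).1 h).mono_left
      (nhdsWithin_mono 0 (fun x hx => ne_of_gt hx))
  have h1 : ∀ᶠ ε in nhdsWithin 0 (Set.Ioi 0), slope φ 0 ε < 0 :=
    hslope.eventually (gt_mem_nhds hL)
  have h2 : ∀ᶠ ε in nhdsWithin 0 (Set.Ioi 0), ε ∈ Set.Ioo 0 ε₀ :=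
    Ioo_mem_nhdsGT_of_mem ⟨le_refl 0, hε₀⟩
  obtain ⟨ε, hs, hmem⟩ := (h1.and h2).exists
  have hεpos : 0 < ε := hmem.1
  have : φ 0 ≤ φ ε := hmin ε (le_of_lt hεpos) (le_of_lt hmem.2)
  rw [slope_def_field, sub_zero] at hs
  have h3 : φ ε - φ 0 < 0 := by
    rcases div_neg_iff.1 hs with ⟨_, hb⟩ | ⟨ha, _⟩
    · linarith
    · exact ha
  linarith

end RoutingInstance

namespace RoutingInstance

variable {V E K : Type*} [Fintype V] [Fintype E] [Fintype K] [DecidableEq E]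
variable (G : RoutingInstance V E K)

lemma lcost_eq_sum_univ (γ : E → ℝ) {l : List E} (hl : l.Nodup) :
    lcost γ l = ∑ e : E, if e ∈ l then γ e else 0 := by
  classical
  have h : ∀ e : E, (if e ∈ l then γ e else 0) = (if e ∈ l.toFinset then γ e else 0) := by
    intro e; simp
  rw [Finset.sum_congr rfl (fun e _ => h e), Finset.sum_ite_mem, Finset.univ_inter,
    List.sum_toFinset _ hl]
  rfl

lemma firstOrder (u : E → ℝ) (σ d umin : ℝ)
    (hu : ∀ e, umin ≤ u e) (hdlt : d < umin) (hdsum : d = ∑ k, G.demand k)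
    {ω₀ : K → ND E → ℝ} (hω₀ : G.FeasO ω₀)
    (hmin : ∀ ω, G.FeasO ω → ∑ e, hf u σ e (Xe e ω₀) ≤ ∑ e, hf u σ e (Xe e ω))
    (k : K) (np nq : ND E) (hp : 0 < ω₀ k np) (hq : G.IsPathOf k (nq : List E)) :
    lcost (fun e => cf u σ e (Xe e ω₀)) (np : List E) ≤
      lcost (fun e => cf u σ e (Xe e ω₀)) (nq : List E) := by
  classical
  by_cases hpq : np = nq
  · subst hpq; exact le_refl _
  set γ : E → ℝ := fun e => cf u σ e (Xe e ω₀) with hγdef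
  have hXlt : ∀ e, Xe e ω₀ < u e := by
    intro e
    have h1 := G.Xe_le_d hω₀ e
    rw [← hdsum] at h1
    linarith [hu e]
  set a : E → ℝ := fun e =>
    (if e ∈ (nq : List E) then (1:ℝ) else 0) - (if e ∈ (np : List E) then 1 else 0) with ha
  set pert : ℝ → (K → ND E → ℝ) := fun ε => Function.update ω₀ k
      (fun n => ω₀ k n + ε * ((if n = nq then (1:ℝ) else 0) - (if n = np then 1 else 0)))
    with hpert
  have hXk : ∀ ε k' e, Xk k' e (pert ε) = Xk k' e ω₀ + (if k' = k then ε * a e else 0) := by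
    intro ε k' e
    by_cases hk : k' = k
    · subst hk
      rw [if_pos rfl, Xk, Xk]
      have hrow : pert ε k' = fun n => ω₀ k' n +
          ε * ((if n = nq then (1:ℝ) else 0) - (if n = np then 1 else 0)) := by
        rw [hpert]; exact Function.update_self _ _ _
      rw [hrow]
      have hterm : ∀ n : ND E,
          (if e ∈ (n : List E) then ω₀ k' n +
              ε * ((if n = nq then (1:ℝ) else 0) - (if n = np then 1 else 0)) else 0)
          = (if e ∈ (n : List E) then ω₀ k' n else 0)
            + (ε * ((if n = nq then (if e ∈ (nq : List E) then (1:ℝ) else 0) else 0)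
                 - (if n = np then (if e ∈ (np : List E) then (1:ℝ) else 0) else 0))) := by
        intro n
        by_cases h1 : n = nq <;> by_cases h2 : n = np <;>
          simp [h1, h2] <;> split_ifs <;> simp_all <;> ring
      rw [Finset.sum_congr rfl (fun n _ => hterm n), Finset.sum_add_distrib]
      congr 1
      rw [← Finset.mul_sum, Finset.sum_sub_distrib, Finset.sum_ite_eq', Finset.sum_ite_eq']
      simp [ha]
    · rw [if_neg hk, Xk, Xk, add_zero]
      have : pert ε k' = ω₀ k' := by rw [hpert]; exact Function.update_of_ne hk _ _
      rw [this]
  have hXe : ∀ ε e, Xe e (pert ε) = Xe e ω₀ + ε * a e := by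
    intro ε e
    rw [Xe, Xe, Finset.sum_congr rfl (fun k' _ => hXk ε k' e), Finset.sum_add_distrib,
      Finset.sum_ite_eq' Finset.univ k (fun _ => ε * a e)]
    simp
  have hfeasp : ∀ ε, 0 ≤ ε → ε ≤ ω₀ k np → G.FeasO (pert ε) := by
    intro ε h0 h1
    have hrow : pert ε k = fun n => ω₀ k n +
        ε * ((if n = nq then (1:ℝ) else 0) - (if n = np then 1 else 0)) := by
      rw [hpert]; exact Function.update_self _ _ _
    have hoth : ∀ k', k' ≠ k → pert ε k' = ω₀ k' := by
      intro k' hk; rw [hpert]; exact Function.update_of_ne hk _ _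
    refine ⟨?_, ?_, ?_⟩
    · intro k' n
      by_cases hk : k' = k
      · subst hk; rw [hrow]; dsimp only
        by_cases h1' : n = nq
        · rw [if_pos h1', if_neg (fun hc => hpq (hc.symm.trans h1'))]
          nlinarith [hω₀.1 k' n]
        · by_cases h2' : n = np
          · rw [if_neg h1', if_pos h2', h2']
            nlinarith
          · rw [if_neg h1', if_neg h2']
            nlinarith [hω₀.1 k' n]
      · rw [hoth k' hk]; exact hω₀.1 k' n
    · intro k' n hne
      by_cases hk : k' = k
      · subst hk; rw [hrow] at hne; dsimp only at hne
        by_cases h1' : n = nq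
        · rw [h1']; exact hq
        · by_cases h2' : n = np
          · rw [h2']; exact hω₀.2.1 k' np (ne_of_gt hp)
          · rw [if_neg h1', if_neg h2'] at hne
            simp only [sub_zero, mul_zero, add_zero, sub_self] at hne
            exact hω₀.2.1 k' n (by simpa using hne)
      · rw [hoth k' hk] at hne; exact hω₀.2.1 k' n hne
    · intro k'
      by_cases hk : k' = k
      · subst hk; rw [hrow]; dsimp only
        rw [Finset.sum_add_distrib, ← Finset.mul_sum, Finset.sum_sub_distrib,
          Finset.sum_ite_eq', Finset.sum_ite_eq']
        simp only [Finset.mem_univ, if_true]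
        rw [← hω₀.2.2 k']
        ring
      · rw [hoth k' hk]; exact hω₀.2.2 k'
  -- derivative of the perturbed potential
  have hφ : HasDerivAt (fun ε => ∑ e, hf u σ e (Xe e ω₀ + ε * a e))
      (∑ e, cf u σ e (Xe e ω₀) * a e) 0 := by
    apply HasDerivAt.fun_sum
    intro e _
    have hinner : HasDerivAt (fun ε : ℝ => Xe e ω₀ + ε * a e) (a e) 0 := by
      simpa using ((hasDerivAt_id (0:ℝ)).mul_const (a e)).const_add (Xe e ω₀)
    have h0 : Xe e ω₀ = Xe e ω₀ + 0 * a e := by ring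
    have houter : HasDerivAt (hf u σ e) (cf u σ e (Xe e ω₀)) (Xe e ω₀ + 0 * a e) := by
      rw [← h0]; exact hf_hasDerivAt u σ e (hXlt e)
    have := houter.comp 0 hinner
    exact this
  have hL : 0 ≤ ∑ e, cf u σ e (Xe e ω₀) * a e := by
    refine deriv_nonneg_of_right_min hφ hp ?_
    intro ε h0 h1
    have hm := hmin (pert ε) (hfeasp ε h0 h1)
    have e0 : (∑ e, hf u σ e (Xe e ω₀ + (0:ℝ) * a e)) = ∑ e, hf u σ e (Xe e ω₀) := by
      norm_num
    have eε : (∑ e, hf u σ e (Xe e ω₀ + ε * a e)) = ∑ e, hf u σ e (Xe e (pert ε)) := by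
      exact Finset.sum_congr rfl fun e _ => by rw [hXe]
    simp only [e0, eε]
    exact hm
  have hsum : ∑ e, cf u σ e (Xe e ω₀) * a e
      = lcost γ (nq : List E) - lcost γ (np : List E) := by
    rw [lcost_eq_sum_univ γ nq.2, lcost_eq_sum_univ γ np.2, ← Finset.sum_sub_distrib]
    apply Finset.sum_congr rfl
    intro e _
    by_cases h1 : e ∈ (nq : List E) <;> by_cases h2 : e ∈ (np : List E) <;>
      simp [ha, hγdef, h1, h2]
  rw [hsum] at hL
  linarith

end RoutingInstance

namespace RoutingInstance

variable {V E K : Type*} [Fintype V] [Fintype E] [Fintype K] [DecidableEq E]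
variable (G : RoutingInstance V E K)

lemma lcost_mono {γ₁ γ₂ : E → ℝ} (h : ∀ e, γ₁ e ≤ γ₂ e) (l : List E) :
    lcost γ₁ l ≤ lcost γ₂ l := by
  induction l with
  | nil => exact le_refl _
  | cons e es ih => rw [lcost_cons, lcost_cons]; exact add_le_add (h e) ih

lemma lcost_smul (c : ℝ) (γ : E → ℝ) (l : List E) :
    lcost (fun e => c * γ e) l = c * lcost γ l := by
  induction l with
  | nil => simp [lcost]
  | cons e es ih => rw [lcost_cons, lcost_cons, ih]; ring

section Equilibrium

variable (u : E → ℝ) (σ d umin : ℝ)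

/-- every `G`-positive path of the equilibrium flow is `cf`-minimal -/
lemma positivePath_cf_min
    (hu : ∀ e, umin ≤ u e) (hdlt : d < umin) (hdsum : d = ∑ k, G.demand k)
    (hσ0 : 0 ≤ σ)
    {ω₀ : K → ND E → ℝ} (hω₀ : G.FeasO ω₀)
    (hmin : ∀ ω, G.FeasO ω → ∑ e, hf u σ e (Xe e ω₀) ≤ ∑ e, hf u σ e (Xe e ω))
    (k : K) (p q : List E) (hp : G.PositivePath (toF ω₀) k p) (hq : G.IsPathOf k q) :
    lcost (fun e => cf u σ e (Xe e ω₀)) p ≤ lcost (fun e => cf u σ e (Xe e ω₀)) q := by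
  classical
  set γ : E → ℝ := fun e => cf u σ e (Xe e ω₀) with hγ
  have hXlt : ∀ e, Xe e ω₀ < u e := by
    intro e
    have h1 := G.Xe_le_d hω₀ e
    rw [← hdsum] at h1
    linarith [hu e]
  have hγ0 : ∀ e, 0 ≤ γ e := fun e => cf_nonneg u hσ0 e (G.Xe_nonneg hω₀ e) (hXlt e)
  refine G.positive_path_min γ (G.source k) hγ0 (G.sink k)
    {r : List E | ∃ h : r.Nodup, 0 < ω₀ k ⟨r, h⟩} ?_ ?_ p ?_ ?_ q hq
  · rintro r ⟨h, hr⟩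
    exact hω₀.2.1 k ⟨r, h⟩ (ne_of_gt hr)
  · rintro r ⟨h, hr⟩ q' hq'
    have hq'n : q'.Nodup := G.nodup_of_walkVerts_nodup hq'.2
    exact G.firstOrder u σ d umin hu hdlt hdsum hω₀ hmin k ⟨r, h⟩ ⟨q', hq'n⟩ hr hq'
  · exact hp.1
  · intro e he
    have hpos := hp.2 e he
    rw [G.toF_Xk] at hpos
    rw [Xk] at hpos
    obtain ⟨n, -, hn⟩ := Finset.exists_ne_zero_of_sum_ne_zero (ne_of_gt hpos)
    by_cases hmem : e ∈ (n : List E)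
    · rw [if_pos hmem] at hn
      refine ⟨(n : List E), ⟨n.2, ?_⟩, hmem⟩
      · have := hω₀.1 k n
        cases n
        exact lt_of_le_of_ne this (Ne.symm hn)
    · rw [if_neg hmem] at hn; exact absurd rfl hn

/-- variational inequality at the equilibrium -/
lemma variational
    (hu : ∀ e, umin ≤ u e) (hdlt : d < umin) (hdsum : d = ∑ k, G.demand k)
    (hσ0 : 0 ≤ σ)
    {ω₀ : K → ND E → ℝ} (hω₀ : G.FeasO ω₀)
    (hmin : ∀ ω, G.FeasO ω → ∑ e, hf u σ e (Xe e ω₀) ≤ ∑ e, hf u σ e (Xe e ω))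
    {ω : K → ND E → ℝ} (hω : G.FeasO ω) :
    ∑ e, Xe e ω₀ * cf u σ e (Xe e ω₀) ≤ ∑ e, Xe e ω * cf u σ e (Xe e ω₀) := by
  classical
  set γ : E → ℝ := fun e => cf u σ e (Xe e ω₀) with hγ
  have hexch : ∀ ω' : K → ND E → ℝ,
      ∑ e, Xe e ω' * γ e = ∑ k, ∑ n : ND E, ω' k n * lcost γ (n : List E) := by
    intro ω'
    have h1 : ∀ e, Xe e ω' * γ e = ∑ k, Xk k e ω' * γ e := by
      intro e; rw [Xe, Finset.sum_mul]
    rw [Finset.sum_congr rfl fun e _ => h1 e, Finset.sum_comm]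
    refine Finset.sum_congr rfl fun k _ => ?_
    have h2 : ∀ e, Xk k e ω' * γ e
        = ∑ n : ND E, (if e ∈ (n : List E) then ω' k n * γ e else 0) := by
      intro e
      rw [Xk, Finset.sum_mul]
      exact Finset.sum_congr rfl fun n _ => by rw [ite_mul, zero_mul]
    rw [Finset.sum_congr rfl fun e _ => h2 e, Finset.sum_comm]
    refine Finset.sum_congr rfl fun n _ => ?_
    rw [lcost_eq_sum_univ γ n.2, Finset.mul_sum]
    exact Finset.sum_congr rfl fun e _ => by rw [mul_ite, mul_zero]
  rw [hexch ω₀, hexch ω]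
  refine Finset.sum_le_sum fun k _ => ?_
  by_cases hex : ∃ n₀ : ND E, 0 < ω₀ k n₀
  · obtain ⟨n₀, hn₀⟩ := hex
    set L := lcost γ (n₀ : List E) with hL
    have hmin' : ∀ n : ND E, G.IsPathOf k (n : List E) → L ≤ lcost γ (n : List E) :=
      fun n hn => G.firstOrder u σ d umin hu hdlt hdsum hω₀ hmin k n₀ n hn₀ hn
    have hused : ∀ n : ND E, 0 < ω₀ k n → lcost γ (n : List E) = L := by
      intro n hn
      have h1 : lcost γ (n : List E) ≤ L :=
        G.firstOrder u σ d umin hu hdlt hdsum hω₀ hmin k n n₀ hn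
          (hω₀.2.1 k n₀ (ne_of_gt hn₀))
      have h2 : L ≤ lcost γ (n : List E) := hmin' n (hω₀.2.1 k n (ne_of_gt hn))
      linarith
    have hlhs : ∑ n : ND E, ω₀ k n * lcost γ (n : List E) = G.demand k * L := by
      rw [← hω₀.2.2 k, Finset.sum_mul]
      refine Finset.sum_congr rfl fun n _ => ?_
      rcases lt_or_eq_of_le (hω₀.1 k n) with h | h
      · rw [hused n h]
      · rw [← h]; ring
    have hrhs : G.demand k * L ≤ ∑ n : ND E, ω k n * lcost γ (n : List E) := by
      rw [← hω.2.2 k, Finset.sum_mul]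
      refine Finset.sum_le_sum fun n _ => ?_
      rcases lt_or_eq_of_le (hω.1 k n) with h | h
      · exact mul_le_mul_of_nonneg_left (hmin' n (hω.2.1 k n (ne_of_gt h))) (le_of_lt h)
      · rw [← h]; simp
    rw [hlhs]; exact hrhs
  · push_neg at hex
    have hlhs : ∑ n : ND E, ω₀ k n * lcost γ (n : List E) = 0 := by
      refine Finset.sum_eq_zero fun n _ => ?_
      have h0 : ω₀ k n = 0 := le_antisymm (hex n) (hω₀.1 k n)
      rw [h0, zero_mul]
    rw [hlhs]
    refine Finset.sum_nonneg fun n _ => mul_nonneg (hω.1 k n) ?_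
    refine lcost_nonneg (fun e => ?_) _
    have hXlt : Xe e ω₀ < u e := by
      have h1 := G.Xe_le_d hω₀ e
      rw [← hdsum] at h1
      linarith [hu e]
    exact cf_nonneg u hσ0 e (G.Xe_nonneg hω₀ e) hXlt

end Equilibrium

end RoutingInstance


lemma amgm_sqrt {a b : ℝ} (ha : 0 ≤ a) (hb : 0 ≤ b) : 2 * Real.sqrt (a * b) ≤ a + b := by
  nlinarith [sq_nonneg (Real.sqrt a - Real.sqrt b), Real.sq_sqrt ha, Real.sq_sqrt hb,
    Real.sqrt_nonneg a, Real.sqrt_nonneg b, Real.sqrt_mul ha b]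

lemma core_ineq {b t : ℝ} (hb0 : 0 < b) (hb1 : b < 1) (ht0 : 0 < t) (ht1 : t ≤ 1)
    (hbt : b ≤ t ^ 2) :
    ((1 - b) / b) * ((t ^ 2 / b - 1) * b / (1 - b) + 2 * t / (1 + t)) ^ 2
      ≤ 4 * (t ^ 2 / b - 2 * t / (1 + t)) := by
  have h1t : (0:ℝ) < 1 + t := by linarith
  have h1b : (0:ℝ) < 1 - b := by linarith
  have key : 4 * (t ^ 2 / b - 2 * t / (1 + t))
      - ((1 - b) / b) * ((t ^ 2 / b - 1) * b / (1 - b) + 2 * t / (1 + t)) ^ 2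
      = ((t ^ 2 - b) * ((1 - t) ^ 2 * b + t * (1 - t) * (t ^ 2 + 3 * t + 4)))
        / (b * (1 + t) ^ 2 * (1 - b)) := by
    field_simp
    ring
  have hnum : (0:ℝ) ≤ (t ^ 2 - b) * ((1 - t) ^ 2 * b + t * (1 - t) * (t ^ 2 + 3 * t + 4)) := by
    apply mul_nonneg (by linarith)
    have h1 : (0:ℝ) ≤ (1 - t) ^ 2 * b := mul_nonneg (sq_nonneg _) hb0.le
    have h2 : (0:ℝ) ≤ t * (1 - t) * (t ^ 2 + 3 * t + 4) := by
      apply mul_nonneg (mul_nonneg ht0.le (by linarith))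
      nlinarith
    linarith
  have hq := div_nonneg hnum (by positivity : (0:ℝ) ≤ b * (1 + t) ^ 2 * (1 - b))
  rw [← key] at hq
  linarith

lemma per_edge_smooth {d umin u x y θ σ Kc : ℝ}
    (hd0 : 0 < d) (hdu : d < umin) (hu : umin ≤ u)
    (hx0 : 0 ≤ x) (hxd : x ≤ d) (hy0 : 0 ≤ y) (hyd : y ≤ d)
    (hθ1 : 1 ≤ θ) (hθρ : θ * (1 - d / umin) ≤ 1)
    (hσ : σ = (θ - 1) * (1 - d / umin) / (d / umin))
    (hK : Kc = (1 + 1 / Real.sqrt (θ * (1 - d / umin))) / 2) :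
    y * (1 / (u - x) + σ * x / (u - x) ^ 2) - σ * x ^ 2 / (u - x) ^ 2 - y / (u - y)
      ≤ (1 - 1 / Kc) * (x / (u - x)) := by
  have humin : 0 < umin := by linarith
  have hρ0 : 0 < d / umin := div_pos hd0 humin
  have hρ1 : d / umin < 1 := (div_lt_one humin).2 hdu
  set b : ℝ := 1 - d / umin with hb
  have hb0 : 0 < b := by rw [hb]; linarith
  have hb1 : b < 1 := by rw [hb]; linarith
  have hθb : 0 < θ * b := by positivity
  set t : ℝ := Real.sqrt (θ * b) with ht
  have ht2 : t ^ 2 = θ * b := Real.sq_sqrt hθb.le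
  have ht0 : 0 < t := Real.sqrt_pos.2 hθb
  have ht1 : t ≤ 1 := by
    rw [ht, show (1:ℝ) = Real.sqrt 1 by rw [Real.sqrt_one]]
    exact Real.sqrt_le_sqrt hθρ
  have hbt : b ≤ t ^ 2 := by rw [ht2]; nlinarith
  have h1t : (0:ℝ) < 1 + t := by linarith
  have hθeq : θ = t ^ 2 / b := by rw [ht2]; field_simp
  set a : ℝ := 2 * t / (1 + t) with haa
  have hKt : Kc = (1 + 1 / t) / 2 := by rw [hK, ht, hb]
  have hKpos : 0 < Kc := by
    rw [hKt]
    have : 0 < 1 / t := by positivity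
    linarith
  have hKa : 1 / Kc = a := by
    have ht' : t ≠ 0 := ht0.ne'
    have h1t' : (1:ℝ) + t ≠ 0 := h1t.ne'
    rw [hKt, haa]
    field_simp
    ring
  have ha1 : a ≤ 1 := by rw [haa, div_le_one h1t]; linarith
  have ha0 : 0 ≤ a := by positivity
  have hxu : x < u := by linarith
  have hyu : y < u := by linarith
  have hux : (0:ℝ) < u - x := by linarith
  have huy : (0:ℝ) < u - y := by linarith
  set s : ℝ := x / (u - x) with hs
  have hs0 : 0 ≤ s := by positivity
  set S : ℝ := d / (umin - d) with hS
  have humd : (0:ℝ) < umin - d := by linarith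
  have hsS : s ≤ S := by
    rw [hs, hS, div_le_div_iff₀ hux humd]
    nlinarith
  have hS' : S = (1 - b) / b := by
    rw [hS, hb]
    rw [div_eq_div_iff humd.ne' (by rw [← hb]; exact hb0.ne')]
    field_simp
    ring
  have hσ' : σ = (t ^ 2 / b - 1) * b / (1 - b) := by
    have h1b : (1:ℝ) - b = d / umin := by rw [hb]; ring
    rw [hσ, hθeq, ← h1b]
  have hσ0 : 0 ≤ σ := by
    rw [hσ']
    apply div_nonneg _ (by rw [hb]; linarith)
    apply mul_nonneg _ hb0.le
    have : (1:ℝ) ≤ t ^ 2 / b := by rw [← hθeq]; exact hθ1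
    linarith
  have hσS : σ * S = θ - 1 := by
    rw [hσ', hS', hθeq]
    have h1b0 : (0:ℝ) < 1 - b := by linarith
    field_simp
  have hcore : S * (σ + a) ^ 2 ≤ 4 * (θ - a) := by
    rw [hS', hσ', hθeq, haa]
    exact core_ineq hb0 hb1 ht0 ht1 hbt
  have hbracket : s ^ 2 * ((σ + a) ^ 2 - 4 * σ) ≤ 4 * s * (1 - a) := by
    rcases le_or_gt ((σ + a) ^ 2 - 4 * σ) 0 with h | h
    · have h1 : s ^ 2 * ((σ + a) ^ 2 - 4 * σ) ≤ 0 :=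
        mul_nonpos_of_nonneg_of_nonpos (sq_nonneg s) h
      have h2 : 0 ≤ 4 * s * (1 - a) := mul_nonneg (by linarith) (by linarith)
      linarith
    · have h2 : S * ((σ + a) ^ 2 - 4 * σ) ≤ 4 * (1 - a) := by
        have hexp : S * ((σ + a) ^ 2 - 4 * σ) = S * (σ + a) ^ 2 - 4 * (σ * S) := by ring
        rw [hexp, hσS]
        linarith [hcore]
      calc s ^ 2 * ((σ + a) ^ 2 - 4 * σ) = (s * s) * ((σ + a) ^ 2 - 4 * σ) := by ring
        _ ≤ (s * S) * ((σ + a) ^ 2 - 4 * σ) :=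
            mul_le_mul_of_nonneg_right (mul_le_mul_of_nonneg_left hsS hs0) h.le
        _ = s * (S * ((σ + a) ^ 2 - 4 * σ)) := by ring
        _ ≤ s * (4 * (1 - a)) := mul_le_mul_of_nonneg_left h2 hs0
        _ = 4 * s * (1 - a) := by ring
  set M : ℝ := (1 + s) * (1 + σ * s) with hM
  have hM0 : 0 ≤ M := by
    rw [hM]
    apply mul_nonneg (by linarith)
    nlinarith
  have hstep3 : 2 + σ * s + s * a ≤ 2 * Real.sqrt M := by
    have hhalf : (2 + σ * s + s * a) / 2 ≤ Real.sqrt M := by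
      rw [Real.le_sqrt (by positivity) hM0]
      have hidq : (1 + s) * (1 + σ * s) - ((2 + σ * s + s * a) / 2) ^ 2
          = (4 * s * (1 - a) - s ^ 2 * ((σ + a) ^ 2 - 4 * σ)) / 4 := by ring
      rw [hM]
      linarith [hidq, hbracket]
    linarith
  -- assembling
  set A : ℝ := 1 / (u - x) + σ * x / (u - x) ^ 2 with hA
  have hA0 : 0 ≤ A := by
    rw [hA]
    have h1 : 0 ≤ 1 / (u - x) := by positivity
    have h2 : 0 ≤ σ * x / (u - x) ^ 2 := div_nonneg (mul_nonneg hσ0 hx0) (by positivity)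
    linarith
  have huA : u * A = M := by
    rw [hA, hM, hs]
    field_simp
    ring
  have hamgm : 2 * Real.sqrt (u * A) ≤ (u - y) * A + u / (u - y) := by
    have hprod : ((u - y) * A) * (u / (u - y)) = u * A := by
      field_simp
    have := amgm_sqrt (mul_nonneg huy.le hA0)
      (le_of_lt (div_pos (show (0:ℝ) < u by linarith) huy))
    rw [hprod] at this
    exact this
  have hident : y * A - y / (u - y) = u * A + 1 - ((u - y) * A + u / (u - y)) := by
    field_simp
    ring
  have hs2 : σ * x ^ 2 / (u - x) ^ 2 = σ * s ^ 2 := by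
    rw [hs, div_pow]
    ring
  have hMexp : M = 1 + s + σ * s + σ * s ^ 2 := by rw [hM]; ring
  have hsqrtM : Real.sqrt (u * A) = Real.sqrt M := by rw [huA]
  rw [hKa, hs2]
  have hfinal : y * A - y / (u - y) ≤ M + 1 - (2 + σ * s + s * a) := by
    rw [hident, huA]
    have := hstep3
    rw [hsqrtM] at hamgm
    linarith
  have : y * A - σ * s ^ 2 - y / (u - y) ≤ (1 - a) * s := by
    rw [hMexp] at hfinal
    linarith [hfinal]
  exact this

namespace RoutingInstance

variable {V E K : Type*} [Fintype V] [Fintype E] [Fintype K] [DecidableEq E]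
variable (G : RoutingInstance V E K)

lemma hf_continuousOn (u : E → ℝ) (σ d umin : ℝ) (hu : ∀ e, umin ≤ u e) (hd : d < umin)
    (e : E) : ContinuousOn (hf u σ e) (Set.Icc 0 d) := by
  have hsub : ∀ x ∈ Set.Icc (0:ℝ) d, u e - x ≠ 0 := by
    intro x hx
    have := hx.2
    have := hu e
    intro hc
    have : u e = x := by linarith
    linarith
  have hc1 : ContinuousOn (fun x : ℝ => u e - x) (Set.Icc 0 d) :=
    (continuous_const.sub continuous_id).continuousOn
  have hlog : ContinuousOn (fun x : ℝ => Real.log (u e - x)) (Set.Icc 0 d) :=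
    Real.continuousOn_log.comp hc1 (fun x hx => hsub x hx)
  have hdiv : ContinuousOn (fun x : ℝ => x / (u e - x)) (Set.Icc 0 d) :=
    continuousOn_id.div hc1 hsub
  exact (continuousOn_const.mul hlog).add (continuousOn_const.mul hdiv)

/-- master construction: a θ-PNE arising as minimizer of the σ-interpolated potential -/
lemma construct (hG : G.Standard) (u : E → ℝ) (umin : ℝ) (humin : 0 < umin)
    (hu : ∀ e, umin ≤ u e) (hd : (∑ k, G.demand k) < umin)
    (hlat : ∀ e x, (0:ℝ) ≤ x → x ≤ ∑ k, G.demand k → G.latency e x = 1 / (u e - x))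
    (hfeas : ∃ f : K → (List E →₀ ℝ), G.Feasible f)
    (θ σ : ℝ) (hθ1 : 1 ≤ θ) (hσ0 : 0 ≤ σ)
    (hratio : 1 + σ * (∑ k, G.demand k) / (umin - (∑ k, G.demand k)) ≤ θ) :
    ∃ ω₀ : K → ND E → ℝ, G.FeasO ω₀ ∧
      (∀ ω, G.FeasO ω → ∑ e, hf u σ e (Xe e ω₀) ≤ ∑ e, hf u σ e (Xe e ω)) ∧
      G.Feasible (toF ω₀) ∧ G.IsPNE θ (toF ω₀) := by
  classical
  set d : ℝ := ∑ k, G.demand k with hdd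
  have hd0 : 0 ≤ d := by
    rw [hdd]
    exact Finset.sum_nonneg fun k _ => (hG.1 k).le
  obtain ⟨ω₀, hω₀, hmin⟩ := G.exists_min (hf u σ) (fun e => hf_continuousOn u σ d umin hu hd e) hfeas
  refine ⟨ω₀, hω₀, hmin, G.toF_feasible hω₀, ?_⟩
  -- PNE property
  intro k p q hp hq
  have hXd : ∀ e, Xe e ω₀ ≤ d := fun e => G.Xe_le_d hω₀ e
  have hX0 : ∀ e, 0 ≤ Xe e ω₀ := fun e => G.Xe_nonneg hω₀ e
  have hXlt : ∀ e, Xe e ω₀ < u e := fun e => by linarith [hXd e, hu e]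
  have hlatX : ∀ e, G.latency e (Xe e ω₀) = ellf u e (Xe e ω₀) := by
    intro e
    rw [hlat e _ (hX0 e) (hXd e), ellf]
  have hpc : ∀ r, G.pathCost (toF ω₀) r = lcost (fun e => ellf u e (Xe e ω₀)) r := by
    intro r
    rw [G.toF_pathCost]
    rw [lcost, lcost]
    congr 1
    exact List.map_congr_left fun e _ => hlatX e
  rw [hpc p, hpc q]
  have h1 : lcost (fun e => ellf u e (Xe e ω₀)) p ≤ lcost (fun e => cf u σ e (Xe e ω₀)) p :=
    lcost_mono (fun e => ellf_le_cf u hσ0 e (hX0 e) (hXlt e)) p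
  have h2 : lcost (fun e => cf u σ e (Xe e ω₀)) p ≤ lcost (fun e => cf u σ e (Xe e ω₀)) q :=
    G.positivePath_cf_min u σ d umin hu hd rfl hσ0 hω₀ hmin k p q hp hq
  have h3 : lcost (fun e => cf u σ e (Xe e ω₀)) q
      ≤ (1 + σ * d / (umin - d)) * lcost (fun e => ellf u e (Xe e ω₀)) q := by
    rw [← lcost_smul]
    exact lcost_mono (fun e => cf_le_ratio u hσ0 hu hd e (hX0 e) (hXd e)) q
  have h4 : (1 + σ * d / (umin - d)) * lcost (fun e => ellf u e (Xe e ω₀)) q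
      ≤ θ * lcost (fun e => ellf u e (Xe e ω₀)) q := by
    apply mul_le_mul_of_nonneg_right hratio
    exact lcost_nonneg (fun e => (ellf_pos u e (hXlt e)).le) q
  linarith

end RoutingInstance


open RoutingInstance in
/-- For an instance with M/M/1 latencies ℓ_e(x) = 1/(u_e − x),
u_e ≥ u_min > d (total demand d, ρ_max = d/u_min < 1) and any θ ≥ 1, with
ρ_max(θ) = max{0, 1 − θ(1 − ρ_max)}, there is a θ-PNE flow of social cost at most
(1/2)(1 + 1/√(1 − ρ_max(θ))) times the socially optimal cost; and if
θ ≥ 1/(1 − ρ_max) there is a θ-PNE flow of socially optimal cost. -/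
theorem stmt_18 {V E K : Type*} [Fintype V] [Fintype E] [Fintype K] [DecidableEq E]
    (G : RoutingInstance V E K) (hG : G.Standard)
    (u : E → ℝ) (umin : ℝ) (humin : 0 < umin)
    (hu : ∀ e, umin ≤ u e)
    (hd : (∑ k, G.demand k) < umin)
    (hlat : ∀ e x, (0:ℝ) ≤ x → x ≤ ∑ k, G.demand k →
      G.latency e x = 1 / (u e - x))
    (hfeas : ∃ f : K → (List E →₀ ℝ), G.Feasible f)
    (θ : ℝ) (hθ : 1 ≤ θ) :
    (∃ f : K → (List E →₀ ℝ), G.Feasible f ∧ G.IsPNE θ f ∧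
      ∀ g : K → (List E →₀ ℝ), G.Feasible g →
        G.socialCost f ≤
          (1/2) * (1 + 1 / Real.sqrt
            (1 - max 0 (1 - θ * (1 - (∑ k, G.demand k) / umin)))) * G.socialCost g) ∧
    (1 / (1 - (∑ k, G.demand k) / umin) ≤ θ →
      ∃ f : K → (List E →₀ ℝ), G.Feasible f ∧ G.IsPNE θ f ∧
        ∀ g : K → (List E →₀ ℝ), G.Feasible g → G.socialCost f ≤ G.socialCost g) := by
    classical
  set d : ℝ := ∑ k, G.demand k with hdd
  have hd0 : 0 ≤ d := Finset.sum_nonneg fun k _ => (hG.1 k).le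
  have hρ1 : d / umin < 1 := (div_lt_one humin).2 hd
  have hρ0 : 0 ≤ d / umin := div_nonneg hd0 humin.le
  have humd : (0:ℝ) < umin - d := by linarith
  have h1ρ : (0:ℝ) < 1 - d / umin := by linarith
  have hSC : ∀ ω : K → ND E → ℝ, G.FeasO ω →
      (∑ e, Xe e ω * G.latency e (Xe e ω)) = ∑ e, Xe e ω / (u e - Xe e ω) := by
    intro ω hω
    refine Finset.sum_congr rfl fun e _ => ?_
    rw [hlat e _ (G.Xe_nonneg hω e) (G.Xe_le_d hω e), mul_one_div]
  rcases le_or_gt 1 (θ * (1 - d / umin)) with hcase | hcase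
  · -- σ = 1 : social optimum is a θ-PNE
    have hd1 : umin * (d / umin) = d := by field_simp
    have hd2 : (umin - d) * (d / (umin - d)) = d := by field_simp
    have hθ' : umin ≤ θ * (umin - d) := by nlinarith
    have hratio : 1 + 1 * d / (umin - d) ≤ θ := by
      rw [one_mul]
      have h3 : (umin - d) * (1 + d / (umin - d)) = umin := by
        rw [mul_add, hd2]; ring
      nlinarith
    obtain ⟨ω₀, hω₀, hmin, hfeasb, hpne⟩ :=
      G.construct hG u umin humin hu hd hlat hfeas θ 1 hθ zero_le_one hratio
    have hΦ : ∀ ω : K → ND E → ℝ, G.FeasO ω →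
        (∑ e, hf u 1 e (Xe e ω)) = ∑ e, Xe e ω * G.latency e (Xe e ω) := by
      intro ω hω
      rw [hSC ω hω]
      refine Finset.sum_congr rfl fun e _ => ?_
      rw [hf]
      ring
    have hopt : ∀ g, G.Feasible g → G.socialCost (toF ω₀) ≤ G.socialCost g := by
      intro g hg
      rw [G.toF_socialCost, G.ofF_socialCost hg,
        ← hΦ ω₀ hω₀, ← hΦ (ofF g) (G.ofF_feas hg)]
      exact hmin (ofF g) (G.ofF_feas hg)
    have hmax0 : max 0 (1 - θ * (1 - d / umin)) = 0 := max_eq_left (by linarith)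
    constructor
    · refine ⟨toF ω₀, hfeasb, hpne, fun g hg => ?_⟩
      rw [hmax0]
      have hc1 : (1:ℝ)/2 * (1 + 1 / Real.sqrt (1 - 0)) = 1 := by
        rw [sub_zero, Real.sqrt_one]
        norm_num
      rw [hc1, one_mul]
      exact hopt g hg
    · intro _
      exact ⟨toF ω₀, hfeasb, hpne, hopt⟩
  · -- interpolation case
    have hdpos : 0 < d := by
      by_contra hc
      push_neg at hc
      have h1 : d / umin ≤ 0 := div_nonpos_of_nonpos_of_nonneg hc humin.le
      nlinarith
    have hρpos : 0 < d / umin := div_pos hdpos humin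
    set σ : ℝ := (θ - 1) * (1 - d / umin) / (d / umin) with hσdef
    have hσ0 : 0 ≤ σ := div_nonneg (mul_nonneg (by linarith) h1ρ.le) hρ0
    have hratio : 1 + σ * d / (umin - d) ≤ θ := by
      have hσS : σ * d / (umin - d) = θ - 1 := by
        rw [hσdef]
        field_simp
      linarith [hσS.le]
    obtain ⟨ω₀, hω₀, hmin, hfeasb, hpne⟩ :=
      G.construct hG u umin humin hu hd hlat hfeas θ σ hθ hσ0 hratio
    set Kc : ℝ := (1 + 1 / Real.sqrt (θ * (1 - d / umin))) / 2 with hKdef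
    have hθρpos : 0 < θ * (1 - d / umin) := by nlinarith
    have hsq0 : 0 < Real.sqrt (θ * (1 - d / umin)) := Real.sqrt_pos.2 hθρpos
    have hsq1 : Real.sqrt (θ * (1 - d / umin)) ≤ 1 :=
      Real.sqrt_le_one.mpr hcase.le
    have hK1 : 1 ≤ Kc := by
      rw [hKdef]
      have : 1 ≤ 1 / Real.sqrt (θ * (1 - d / umin)) := by
        rw [le_div_iff₀ hsq0, one_mul]
        exact hsq1
      linarith
    have hKpos : 0 < Kc := by linarith
    have hbound : ∀ g, G.Feasible g → G.socialCost (toF ω₀) ≤ Kc * G.socialCost g := by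
      intro g hg
      have hωf : G.FeasO (ofF g) := G.ofF_feas hg
      have hVI := G.variational u σ d umin hu hd hdd hσ0 hω₀ hmin hωf
      have hPE : ∀ e : E,
          Xe e (ofF g) * cf u σ e (Xe e ω₀)
            - σ * (Xe e ω₀) ^ 2 / (u e - Xe e ω₀) ^ 2
            - Xe e (ofF g) / (u e - Xe e (ofF g))
          ≤ (1 - 1 / Kc) * (Xe e ω₀ / (u e - Xe e ω₀)) := by
        intro e
        exact per_edge_smooth hdpos hd (hu e) (G.Xe_nonneg hω₀ e) (G.Xe_le_d hω₀ e)
          (G.Xe_nonneg hωf e) (G.Xe_le_d hωf e) hθ hcase.le hσdef hKdef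
      have hxid : ∀ e : E, Xe e ω₀ * cf u σ e (Xe e ω₀)
          = Xe e ω₀ / (u e - Xe e ω₀) + σ * (Xe e ω₀) ^ 2 / (u e - Xe e ω₀) ^ 2 := by
        intro e
        rw [cf]
        ring
      have hsum : ∑ e, Xe e ω₀ / (u e - Xe e ω₀)
          ≤ (∑ e, Xe e (ofF g) / (u e - Xe e (ofF g)))
            + (1 - 1 / Kc) * ∑ e, Xe e ω₀ / (u e - Xe e ω₀) := by
        have h1 : ∑ e, Xe e ω₀ / (u e - Xe e ω₀)
            = (∑ e, Xe e ω₀ * cf u σ e (Xe e ω₀))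
              - ∑ e, σ * (Xe e ω₀) ^ 2 / (u e - Xe e ω₀) ^ 2 := by
          rw [← Finset.sum_sub_distrib]
          exact Finset.sum_congr rfl fun e _ => by rw [hxid e]; ring
        have h2 : (∑ e, Xe e (ofF g) * cf u σ e (Xe e ω₀))
              - ∑ e, σ * (Xe e ω₀) ^ 2 / (u e - Xe e ω₀) ^ 2
            ≤ (∑ e, Xe e (ofF g) / (u e - Xe e (ofF g)))
              + (1 - 1 / Kc) * ∑ e, Xe e ω₀ / (u e - Xe e ω₀) := by
          rw [← Finset.sum_sub_distrib, Finset.mul_sum, ← Finset.sum_add_distrib]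
          refine Finset.sum_le_sum fun e _ => ?_
          linarith [hPE e]
        linarith
      have hsc1 : G.socialCost (toF ω₀) = ∑ e, Xe e ω₀ / (u e - Xe e ω₀) := by
        rw [G.toF_socialCost, hSC ω₀ hω₀]
      have hsc2 : G.socialCost g = ∑ e, Xe e (ofF g) / (u e - Xe e (ofF g)) := by
        rw [G.ofF_socialCost hg, hSC (ofF g) hωf]
      rw [hsc1, hsc2]
      set P : ℝ := ∑ e, Xe e ω₀ / (u e - Xe e ω₀)
      set Q : ℝ := ∑ e, Xe e (ofF g) / (u e - Xe e (ofF g))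
      have hPQ : P * (1 / Kc) ≤ Q := by
        have : P - (1 - 1 / Kc) * P = P * (1 / Kc) := by ring
        linarith
      calc P = Kc * (P * (1 / Kc)) := by field_simp
        _ ≤ Kc * Q := mul_le_mul_of_nonneg_left hPQ hKpos.le
    constructor
    · refine ⟨toF ω₀, hfeasb, hpne, fun g hg => ?_⟩
      have hmax : max 0 (1 - θ * (1 - d / umin)) = 1 - θ * (1 - d / umin) :=
        max_eq_right (by linarith)
      rw [hmax]
      have hinn : (1:ℝ) - (1 - θ * (1 - d / umin)) = θ * (1 - d / umin) := by ring
      rw [hinn]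
      have hcK : (1:ℝ)/2 * (1 + 1 / Real.sqrt (θ * (1 - d / umin))) = Kc := by
        rw [hKdef]
        ring
      rw [hcK]
      exact hbound g hg
    · intro hpart2
      exfalso
      have : (1:ℝ) ≤ θ * (1 - d / umin) := by
        rw [div_le_iff₀ h1ρ] at hpart2
        linarith
      linarith
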